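/- arXiv:2001.09626 — 2 statements merged into one kernel-verified Lean document; each statement's English description precedes it below -/
import Mathlib

section
/- Let A be a symmetric positive semidefinite n×n real matrix and B an m×n real matrix such that ker(A) ∩ ker(B) = {0} and B has full row rank (ker(Bᵀ) = {0}). Then the saddle point system [[A, Bᵀ],[B, 0]] [u; λ] = [f; 0] has a unique solution for every f ∈ ℝⁿ, i.e., the block matrix [[A, Bᵀ],[B, 0]] is invertible. -/
open Matrix

/-- Saddle point system with PSD `A`, full-row-rank `B`, and
`ker A ∩ ker B = {0}` is uniquely solvable: the block matrix is invertible. -/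
theorem saddle_point_invertible {n m : ℕ}
    (A : Matrix (Fin n) (Fin n) ℝ) (B : Matrix (Fin m) (Fin n) ℝ)
    (hA : A.PosSemidef)
    (hker : ∀ v : Fin n → ℝ, A.mulVec v = 0 → B.mulVec v = 0 → v = 0)
    (hBT : ∀ w : Fin m → ℝ, Bᵀ.mulVec w = 0 → w = 0) :
    IsUnit (Matrix.fromBlocks A Bᵀ B (0 : Matrix (Fin m) (Fin m) ℝ)) := by
  rw [← Matrix.mulVec_injective_iff_isUnit]
  rw [← Matrix.coe_mulVecLin, injective_iff_map_eq_zero' (Matrix.mulVecLin _)]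
  intro x
  constructor
  · intro hx
    set u : Fin n → ℝ := x ∘ Sum.inl
    set w : Fin m → ℝ := x ∘ Sum.inr
    rw [show x = Sum.elim u w by ext (i|i) <;> rfl] at hx ⊢
    rw [Matrix.mulVecLin_apply, Matrix.fromBlocks_mulVec] at hx
    have h1 : A.mulVec u + Bᵀ.mulVec w = 0 := by
      ext i; exact congrFun hx (Sum.inl i)
    have h2 : B.mulVec u = 0 := by
      ext i
      have := congrFun hx (Sum.inr i)
      simpa [Matrix.zero_mulVec] using this
    have hAu : A.mulVec u = 0 := by
      have h3 : u ⬝ᵥ (A.mulVec u + Bᵀ.mulVec w) = 0 := by rw [h1, dotProduct_zero]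
      rw [dotProduct_add] at h3
      have h4 : u ⬝ᵥ Bᵀ.mulVec w = 0 := by
        rw [dotProduct_mulVec, vecMul_transpose, h2, zero_dotProduct]
      rw [h4, add_zero] at h3
      have := (hA.dotProduct_mulVec_zero_iff u).mp (by simpa using h3)
      exact this
    have hu : u = 0 := hker u hAu h2
    have hw : w = 0 := by
      apply hBT
      have : A.mulVec u + Bᵀ.mulVec w = 0 := h1
      rw [hu, Matrix.mulVec_zero, zero_add] at this
      exact this
    rw [hu, hw, Sum.elim_zero_zero]
  · intro hx; rw [hx, map_zero]
end

section
/- Let 𝒜 = [[A, (PχB)ᵀ],[PχB, 0]] where A ∈ ℝ^{n×n} is symmetric positive semidefinite, B ∈ ℝ^{m×n}, Pχ is the orthogonal projection onto ker(Gᵀ) with G := BR and range(R) = ker(A), and ker(A) ∩ ker(B) = {0}, ker(Bᵀ) = {0}. Then 𝒜 maps range(A) × ker(Gᵀ) bijectively onto itself. -/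
open Matrix

/-- The projected saddle-point operator `𝒜 = [[A, (PχB)ᵀ],[PχB, 0]]` maps
`range A × ker Gᵀ` bijectively onto itself. -/
theorem projected_saddle_point_bijective {n m r : ℕ}
    (A : Matrix (Fin n) (Fin n) ℝ) (B : Matrix (Fin m) (Fin n) ℝ)
    (R : Matrix (Fin n) (Fin r) ℝ)
    (hA : A.PosSemidef)
    (hR : {v : Fin n → ℝ | ∃ w : Fin r → ℝ, R.mulVec w = v} =
      {v : Fin n → ℝ | A.mulVec v = 0})
    (hkerAB : ∀ v : Fin n → ℝ, A.mulVec v = 0 → B.mulVec v = 0 → v = 0)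
    (hBT : ∀ w : Fin m → ℝ, Bᵀ.mulVec w = 0 → w = 0)
    (G : Matrix (Fin m) (Fin r) ℝ) (hG : G = B * R)
    (hGrank : ∀ x : Fin r → ℝ, G.mulVec x = 0 → x = 0)
    (Pχ : Matrix (Fin m) (Fin m) ℝ)
    (hPχ : Pχ = (1 : Matrix (Fin m) (Fin m) ℝ) - G * (Gᵀ * G)⁻¹ * Gᵀ) :
    Set.BijOn
      (fun p : (Fin n → ℝ) × (Fin m → ℝ) =>
        (A.mulVec p.1 + (Pχ * B)ᵀ.mulVec p.2, (Pχ * B).mulVec p.1))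
      {p : (Fin n → ℝ) × (Fin m → ℝ) |
        (∃ w : Fin n → ℝ, A.mulVec w = p.1) ∧ Gᵀ.mulVec p.2 = 0}
      {p : (Fin n → ℝ) × (Fin m → ℝ) |
        (∃ w : Fin n → ℝ, A.mulVec w = p.1) ∧ Gᵀ.mulVec p.2 = 0} := by
  classical
  -- A is symmetric
  have hAsymm : Aᵀ = A := by simpa [Matrix.IsSymm] using hA.1
  -- GᵀG is invertible
  have hGtGunit : IsUnit (Gᵀ * G) := by
    rw [← Matrix.mulVec_injective_iff_isUnit]
    intro a b hab
    have h0 : (Gᵀ * G) *ᵥ (a - b) = 0 := by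
      rw [Matrix.mulVec_sub, hab, sub_self]
    have hz : G *ᵥ (a - b) = 0 := by
      have h1 : (a - b) ⬝ᵥ ((Gᵀ * G) *ᵥ (a - b)) =
          (G *ᵥ (a - b)) ⬝ᵥ (G *ᵥ (a - b)) := by
        rw [← Matrix.mulVec_mulVec, Matrix.dotProduct_mulVec, Matrix.vecMul_transpose]
      rw [h0, dotProduct_zero] at h1
      exact (dotProduct_self_eq_zero).mp h1.symm
    exact sub_eq_zero.mp (hGrank (a - b) hz)
  have hGtGdet : IsUnit (Gᵀ * G).det := (Matrix.isUnit_iff_isUnit_det _).mp hGtGunit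
  have hGtGinv : (Gᵀ * G) * (Gᵀ * G)⁻¹ = 1 := Matrix.mul_nonsing_inv _ hGtGdet
  -- Gᵀ ∘ Pχ = 0
  have hGtP : Gᵀ * Pχ = 0 := by
    rw [hPχ, Matrix.mul_sub, Matrix.mul_one]
    rw [show Gᵀ * (G * (Gᵀ * G)⁻¹ * Gᵀ) = (Gᵀ * G) * (Gᵀ * G)⁻¹ * Gᵀ by
      simp only [Matrix.mul_assoc]]
    rw [hGtGinv, Matrix.one_mul, sub_self]
  have hGP : ∀ v : Fin m → ℝ, Gᵀ *ᵥ (Pχ *ᵥ v) = 0 := by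
    intro v
    rw [Matrix.mulVec_mulVec, hGtP, Matrix.zero_mulVec]
  -- (Pχ B)ᵀ y = Bᵀ y on ker Gᵀ
  have hPty : ∀ y : Fin m → ℝ, Gᵀ *ᵥ y = 0 → Pχᵀ *ᵥ y = y := by
    intro y hy
    rw [hPχ]
    simp only [Matrix.transpose_sub, Matrix.transpose_one, Matrix.transpose_mul,
      Matrix.transpose_transpose, Matrix.sub_mulVec, Matrix.one_mulVec]
    rw [← Matrix.mulVec_mulVec, ← Matrix.mulVec_mulVec, hy, Matrix.mulVec_zero,
      Matrix.mulVec_zero, sub_zero]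
  have hPBty : ∀ y : Fin m → ℝ, Gᵀ *ᵥ y = 0 → (Pχ * B)ᵀ *ᵥ y = Bᵀ *ᵥ y := by
    intro y hy
    rw [Matrix.transpose_mul, ← Matrix.mulVec_mulVec, hPty y hy]
  -- A * R = 0
  have hARv : ∀ w : Fin r → ℝ, A *ᵥ (R *ᵥ w) = 0 := by
    intro w
    have : R *ᵥ w ∈ {v : Fin n → ℝ | A *ᵥ v = 0} := hR ▸ ⟨w, rfl⟩
    exact this
  have hAR : A * R = 0 := by
    ext i j
    have := congrFun (hARv (Pi.single j 1)) i
    simpa [Matrix.mul_apply, Matrix.mulVec, dotProduct, Pi.single_apply,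
      mul_ite, mul_one, mul_zero, Finset.sum_ite_eq'] using this
  -- ker A = range R
  have hkerA : LinearMap.ker A.mulVecLin = LinearMap.range R.mulVecLin := by
    ext v
    rw [LinearMap.mem_ker, LinearMap.mem_range]
    simp only [Matrix.mulVecLin_apply]
    exact (Set.ext_iff.mp hR v).symm
  -- R has injective mulVec
  have hRinj : Function.Injective R.mulVecLin := by
    rw [← LinearMap.ker_eq_bot, LinearMap.ker_eq_bot']
    intro w hw
    apply hGrank
    rw [hG, ← Matrix.mulVec_mulVec]
    simp only [Matrix.mulVecLin_apply] at hw
    rw [hw, Matrix.mulVec_zero]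
  -- range A = ker Rᵀ
  have hrangeA : LinearMap.range A.mulVecLin = LinearMap.ker Rᵀ.mulVecLin := by
    have hle : LinearMap.range A.mulVecLin ≤ LinearMap.ker Rᵀ.mulVecLin := by
      rintro v ⟨u, rfl⟩
      simp only [LinearMap.mem_ker, Matrix.mulVecLin_apply, Matrix.mulVec_mulVec]
      rw [show Rᵀ * A = (Aᵀ * R)ᵀ by rw [Matrix.transpose_mul, Matrix.transpose_transpose],
        hAsymm, hAR, Matrix.transpose_zero, Matrix.zero_mulVec]
    have hrankR : Module.finrank ℝ (LinearMap.range R.mulVecLin) = r :=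
      (LinearMap.finrank_range_of_inj hRinj).trans (Module.finrank_fin_fun ℝ)
    have h1 := LinearMap.finrank_range_add_finrank_ker A.mulVecLin
    have h2 := LinearMap.finrank_range_add_finrank_ker Rᵀ.mulVecLin
    rw [hkerA, hrankR, Module.finrank_fin_fun ℝ] at h1
    have hrankRt : Module.finrank ℝ (LinearMap.range Rᵀ.mulVecLin) = r := by
      have : Rᵀ.rank = R.rank := Matrix.rank_transpose R
      simpa [Matrix.rank, hrankR] using this
    rw [hrankRt, Module.finrank_fin_fun ℝ] at h2
    exact Submodule.eq_of_le_of_finrank_eq hle (by omega)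
  -- Bᵀ maps ker Gᵀ into range A
  have hBtr : ∀ y : Fin m → ℝ, Gᵀ *ᵥ y = 0 → Bᵀ *ᵥ y ∈ LinearMap.range A.mulVecLin := by
    intro y hy
    rw [hrangeA, LinearMap.mem_ker]
    simp only [Matrix.mulVecLin_apply, Matrix.mulVec_mulVec]
    rw [show Rᵀ * Bᵀ = (B * R)ᵀ by rw [Matrix.transpose_mul], ← hG, hy]
  -- the invariant subspace S and the linear map f
  set S : Submodule ℝ ((Fin n → ℝ) × (Fin m → ℝ)) :=
    (LinearMap.range A.mulVecLin).prod (LinearMap.ker Gᵀ.mulVecLin) with hSdef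
  have hSet : {p : (Fin n → ℝ) × (Fin m → ℝ) |
      (∃ w : Fin n → ℝ, A.mulVec w = p.1) ∧ Gᵀ.mulVec p.2 = 0} = (S : Set _) := by
    ext p
    rw [SetLike.mem_coe, hSdef, Submodule.mem_prod, LinearMap.mem_ker]
    simp only [LinearMap.mem_range, Matrix.mulVecLin_apply, Set.mem_setOf_eq]
  set f : ((Fin n → ℝ) × (Fin m → ℝ)) →ₗ[ℝ] ((Fin n → ℝ) × (Fin m → ℝ)) :=
    LinearMap.prod
      (A.mulVecLin.comp (LinearMap.fst ℝ _ _) +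
        (Pχ * B)ᵀ.mulVecLin.comp (LinearMap.snd ℝ _ _))
      ((Pχ * B).mulVecLin.comp (LinearMap.fst ℝ _ _)) with hfdef
  have hfapp : ∀ p : (Fin n → ℝ) × (Fin m → ℝ),
      f p = (A *ᵥ p.1 + (Pχ * B)ᵀ *ᵥ p.2, (Pχ * B) *ᵥ p.1) := fun p => rfl
  -- f maps S into S
  have hmaps : ∀ p ∈ S, f p ∈ S := by
    rintro ⟨x, y⟩ hp
    obtain ⟨hx, hy⟩ := hp
    simp only [Submodule.mem_prod, LinearMap.mem_ker, Matrix.mulVecLin_apply] at hx hy ⊢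
    rw [hfapp]
    constructor
    · apply Submodule.add_mem
      · exact ⟨x, rfl⟩
      · rw [hPBty y hy]
        exact hBtr y hy
    · show Gᵀ *ᵥ ((Pχ * B) *ᵥ x) = 0
      rw [← Matrix.mulVec_mulVec]
      exact hGP (B *ᵥ x)
  -- kernel of f on S is trivial
  have hker0 : ∀ p ∈ S, f p = 0 → p = 0 := by
    rintro ⟨x, y⟩ hp hfp
    obtain ⟨hx, hy⟩ := hp
    simp only [Submodule.mem_prod, SetLike.mem_coe, LinearMap.mem_ker, LinearMap.mem_range,
      Matrix.mulVecLin_apply] at hx hy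
    rw [hfapp] at hfp
    have heq1 : A *ᵥ x + Bᵀ *ᵥ y = 0 := by
      rw [← hPBty y hy]; exact congrArg Prod.fst hfp
    have heq2 : Pχ *ᵥ (B *ᵥ x) = 0 := by
      rw [Matrix.mulVec_mulVec]; exact congrArg Prod.snd hfp
    -- B x ∈ range G
    have hBx : B *ᵥ x = (G * ((Gᵀ * G)⁻¹ * Gᵀ)) *ᵥ (B *ᵥ x) := by
      rw [hPχ] at heq2
      rw [Matrix.sub_mulVec, Matrix.one_mulVec, sub_eq_zero] at heq2
      rw [← Matrix.mul_assoc]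
      exact heq2
    -- x ⬝ (Bᵀ y) = 0
    have hdotT : ∀ {k l : ℕ} (M : Matrix (Fin k) (Fin l) ℝ) (v : Fin k → ℝ)
        (w : Fin l → ℝ), v ⬝ᵥ (M *ᵥ w) = (Mᵀ *ᵥ v) ⬝ᵥ w := by
      intro k l M v w
      rw [Matrix.dotProduct_mulVec, Matrix.mulVec_transpose]
    have hdot : x ⬝ᵥ (Bᵀ *ᵥ y) = 0 := by
      rw [hdotT, Matrix.transpose_transpose]
      rw [hBx, ← Matrix.mulVec_mulVec]
      rw [dotProduct_comm, hdotT, hy, zero_dotProduct]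
    -- x ⬝ A x = 0 so A x = 0
    have hAx : A *ᵥ x = 0 := by
      have h1 : x ⬝ᵥ (A *ᵥ x + Bᵀ *ᵥ y) = 0 := by rw [heq1, dotProduct_zero]
      rw [dotProduct_add, hdot, add_zero] at h1
      have := (hA.dotProduct_mulVec_zero_iff x).mp (by simpa using h1)
      exact this
    -- x ∈ range A and A x = 0; so x = 0
    obtain ⟨u, hu⟩ := hx
    have hx0 : x = 0 := by
      have hxx : x ⬝ᵥ x = 0 := by
        rw [← hu, hdotT, hAsymm, hu, hAx, zero_dotProduct]
      exact dotProduct_self_eq_zero.mp hxx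
    have hy0 : y = 0 := by
      apply hBT
      rw [hx0, Matrix.mulVec_zero, zero_add] at heq1
      exact heq1
    rw [hx0, hy0]
    rfl
  -- restrict f to S; injective ⇒ surjective in finite dimension
  set g : S →ₗ[ℝ] S := f.restrict hmaps with hgdef
  have hginj : Function.Injective g := by
    rw [← LinearMap.ker_eq_bot, LinearMap.ker_eq_bot']
    intro p hp
    have hval : f ↑p = 0 := by
      have := congrArg Subtype.val hp
      rwa [hgdef, LinearMap.restrict_coe_apply, ZeroMemClass.coe_zero] at this
    exact Subtype.ext (hker0 ↑p p.2 hval)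
  have hgsurj : Function.Surjective g := LinearMap.injective_iff_surjective.mp hginj
  rw [hSet]
  refine ⟨?_, ?_, ?_⟩
  · intro p hp
    exact hmaps p hp
  · intro p hp q hq heq
    have hmem : p - q ∈ S := S.sub_mem hp hq
    have hfz : f (p - q) = 0 := by
      rw [map_sub]
      have hfeq : f p = f q := heq
      rw [hfeq, sub_self]
    exact sub_eq_zero.mp (hker0 (p - q) hmem hfz)
  · intro q hq
    obtain ⟨p, hp⟩ := hgsurj ⟨q, hq⟩
    refine ⟨↑p, p.2, ?_⟩
    have hval : f ↑p = q := by
      have := congrArg Subtype.val hp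
      rwa [hgdef, LinearMap.restrict_coe_apply] at this
    exact hval
end
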